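/- For sequences under ▷_ℓ: Slow_ℓ(list(t_1,...,t_k)) = Σ_{i=1}^k Slow_ℓ(t_i), where Slow_ℓ(a) is the length of the longest ▷_ℓ-descending chain from a. -/

import Mathlib

/-- First-order terms over signature `F` and variables `V`. -/
inductive Trm (F V : Type) where
  | var : V → Trm F V
  | fn : F → List (Trm F V) → Trm F V

/-- `SSub s t` : `t` is a strict subterm of `s`. -/
inductive SSub {F V : Type} : Trm F V → Trm F V → Prop where
  | arg {f ts t} : t ∈ ts → SSub (Trm.fn f ts) t
  | trans {f ts s t} : s ∈ ts → SSub s t → SSub (Trm.fn f ts) t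

/-- Reflexive closure of a relation, used for product extensions. -/
def EqOr {α : Type} (r : α → α → Prop) (a b : α) : Prop := a = b ∨ r a b

/-- Product extension of a relation on lists: componentwise equal-or-smaller,
with at least one component strictly smaller. -/
def ProdExtL {α : Type} (r : α → α → Prop) (xs ys : List α) : Prop :=
  List.Forall₂ (EqOr r) xs ys ∧
    ∃ i, ∃ (h₁ : i < xs.length) (h₂ : i < ys.length), r xs[i] ys[i]

/-- Elements compared by `▷_ℓ`: terms (inl) or sequences of terms (inr). -/
abbrev TS (F V : Type) := Trm F V ⊕ List (Trm F V)

/-- Identification of a term with the singleton sequence. -/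
def toL {F V : Type} : TS F V → List (Trm F V) := Sum.elim (fun t => [t]) id

mutual
  /-- The auxiliary order `▷_ℓ` (Definition of `poel`) on terms and sequences,
  induced by a precedence `prec` and the width bound `ℓ`. -/
  inductive Poel {F V : Type} (prec : F → F → Prop) (ℓ : ℕ) : TS F V → TS F V → Prop where
    /- clause (1): precedence descent to strict subterms, width at most ℓ -/
    | ia {f g : F} {ss ts : List (Trm F V)} :
        prec f g → (∀ t ∈ ts, SSub (Trm.fn f ss) t) → ts.length ≤ ℓ →
        Poel prec ℓ (Sum.inl (Trm.fn f ss)) (Sum.inl (Trm.fn g ts))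
    /- clause (2): same symbol, product extension of the strict-subterm order -/
    | tsc {f : F} {ss ts : List (Trm F V)} :
        ProdExtL SSub ss ts →
        Poel prec ℓ (Sum.inl (Trm.fn f ss)) (Sum.inl (Trm.fn f ts))
    /- clause (3): descent from a term to a sequence of at most ℓ smaller terms -/
    | ialst {f : F} {ss ts : List (Trm F V)} :
        (∀ t ∈ ts, Poel prec ℓ (Sum.inl (Trm.fn f ss)) (Sum.inl t)) → ts.length ≤ ℓ →
        Poel prec ℓ (Sum.inl (Trm.fn f ss)) (Sum.inr ts)
    /- clause (4): sequences, splitting `ts = b₁ ++ ⋯ ++ b_k` with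
       `⟨s₁,…,s_k⟩` greater than `⟨b₁,…,b_k⟩` in the product extension of `▷_ℓ` -/
    | ms {ss ts : List (Trm F V)} (bs : List (TS F V)) :
        ts = (bs.map toL).flatten →
        PoelProd prec ℓ (ss.map Sum.inl) bs →
        Poel prec ℓ (Sum.inr ss) (Sum.inr ts)

  /-- Product extension of `▷_ℓ`: componentwise equal-or-smaller with at
  least one strict decrease. -/
  inductive PoelProd {F V : Type} (prec : F → F → Prop) (ℓ : ℕ) :
      List (TS F V) → List (TS F V) → Prop where
    | strict {a b as bs} : Poel prec ℓ a b → PoelGE prec ℓ as bs →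
        PoelProd prec ℓ (a :: as) (b :: bs)
    | cons_eq {a as bs} : PoelProd prec ℓ as bs → PoelProd prec ℓ (a :: as) (a :: bs)
    | cons_lt {a b as bs} : Poel prec ℓ a b → PoelProd prec ℓ as bs →
        PoelProd prec ℓ (a :: as) (b :: bs)

  /-- Componentwise equal-or-smaller (w.r.t. `▷_ℓ`) lists of equal length. -/
  inductive PoelGE {F V : Type} (prec : F → F → Prop) (ℓ : ℕ) :
      List (TS F V) → List (TS F V) → Prop where
    | nil : PoelGE prec ℓ [] []
    | cons_eq {a as bs} : PoelGE prec ℓ as bs → PoelGE prec ℓ (a :: as) (a :: bs)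
    | cons_lt {a b as bs} : Poel prec ℓ a b → PoelGE prec ℓ as bs →
        PoelGE prec ℓ (a :: as) (b :: bs)
end


/-- `DescChain r a L` : `L` is a strictly `r`-descending chain starting from `a`. -/
def DescChain {α : Type} (r : α → α → Prop) : α → List α → Prop
  | _, [] => True
  | a, b :: l => r a b ∧ DescChain r b l

/-- `slow` assigns to each element the length of the longest `r`-descending
chain starting from it. -/
def IsMaxChainLen {α : Type} (r : α → α → Prop) (slow : α → ℕ) : Prop :=
  ∀ a, (∃ L, DescChain r a L ∧ L.length = slow a) ∧ (∀ L, DescChain r a L → L.length ≤ slow a)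


section Aux

variable {F V : Type} {prec : F → F → Prop} {ℓ : ℕ}

lemma poel_inr_inv {ss : List (Trm F V)} {b : TS F V}
    (h : Poel prec ℓ (Sum.inr ss) b) : ∃ ts, b = Sum.inr ts := by
  cases h with
  | ms bs e p => exact ⟨_, rfl⟩

lemma poelGE_refl : ∀ as : List (TS F V), PoelGE prec ℓ as as
  | [] => PoelGE.nil
  | _ :: as => PoelGE.cons_eq (poelGE_refl as)

lemma poelGE_append : ∀ {as bs cs ds : List (TS F V)}, PoelGE prec ℓ as bs →
    PoelGE prec ℓ cs ds → PoelGE prec ℓ (as ++ cs) (bs ++ ds) := by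
  intro as
  induction as with
  | nil => intro bs cs ds h h2; cases h; exact h2
  | cons a as ih =>
    intro bs cs ds h h2
    cases h with
    | cons_eq h => exact PoelGE.cons_eq (ih h h2)
    | cons_lt h1 h => exact PoelGE.cons_lt h1 (ih h h2)

lemma poelProd_append_right : ∀ {as bs : List (TS F V)} (cs : List (TS F V)),
    PoelProd prec ℓ as bs → PoelProd prec ℓ (as ++ cs) (bs ++ cs) := by
  intro as
  induction as with
  | nil => intro bs cs h; cases h
  | cons a as ih =>
    intro bs cs h
    cases h with
    | strict h hge => exact PoelProd.strict h (poelGE_append hge (poelGE_refl cs))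
    | cons_eq h => exact PoelProd.cons_eq (ih cs h)
    | cons_lt h1 h => exact PoelProd.cons_lt h1 (ih cs h)

lemma poelProd_append_left {as bs : List (TS F V)} : ∀ (cs : List (TS F V)),
    PoelProd prec ℓ as bs → PoelProd prec ℓ (cs ++ as) (cs ++ bs)
  | [], h => h
  | _ :: cs, h => PoelProd.cons_eq (poelProd_append_left cs h)

lemma flatten_map_inl (vs : List (Trm F V)) :
    (vs.map (toL ∘ (Sum.inl : Trm F V → TS F V))).flatten = vs := by
  induction vs with
  | nil => rfl
  | cons v vs ih => simpa [toL] using ih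

lemma poel_concat_right {us us' vs : List (Trm F V)}
    (h : Poel prec ℓ (Sum.inr us) (Sum.inr us')) :
    Poel prec ℓ (Sum.inr (us ++ vs)) (Sum.inr (us' ++ vs)) := by
  cases h with
  | ms bs e p =>
    refine Poel.ms (bs ++ vs.map Sum.inl) ?_ ?_
    · simp [e, List.map_append, List.flatten_append, flatten_map_inl]
    · rw [List.map_append]; exact poelProd_append_right _ p

lemma poel_concat_left {us vs vs' : List (Trm F V)}
    (h : Poel prec ℓ (Sum.inr vs) (Sum.inr vs')) :
    Poel prec ℓ (Sum.inr (us ++ vs)) (Sum.inr (us ++ vs')) := by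
  cases h with
  | ms bs e p =>
    refine Poel.ms (us.map Sum.inl ++ bs) ?_ ?_
    · simp [e, List.map_append, List.flatten_append, flatten_map_inl]
    · rw [List.map_append]; exact poelProd_append_left _ p

lemma poel_toL {a b : TS F V} (h : Poel prec ℓ a b) :
    Poel prec ℓ (Sum.inr (toL a)) (Sum.inr (toL b)) := by
  match a with
  | Sum.inl t =>
    refine Poel.ms [b] (by simp) ?_
    exact PoelProd.strict h PoelGE.nil
  | Sum.inr l =>
    obtain ⟨l', rfl⟩ := poel_inr_inv h
    exact h

lemma chain_toL : ∀ (L : List (TS F V)) (a : TS F V),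
    DescChain (Poel prec ℓ) a L →
    ∃ N, DescChain (Poel prec ℓ) (Sum.inr (toL a)) N ∧ N.length = L.length
  | [], _, _ => ⟨[], trivial, rfl⟩
  | b :: L, a, ⟨hb, hL⟩ => by
    obtain ⟨N, hN, hlen⟩ := chain_toL L b hL
    exact ⟨Sum.inr (toL b) :: N, ⟨poel_toL hb, hN⟩, by simp [hlen]⟩

lemma chain_prefix : ∀ (M : List (TS F V)) (vs us : List (Trm F V)),
    DescChain (Poel prec ℓ) (Sum.inr vs) M →
    ∃ N, DescChain (Poel prec ℓ) (Sum.inr (us ++ vs)) N ∧ N.length = M.length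
  | [], _, _, _ => ⟨[], trivial, rfl⟩
  | b :: M, vs, us, ⟨hb, hM⟩ => by
    obtain ⟨vs', rfl⟩ := poel_inr_inv hb
    obtain ⟨N, hN, hlen⟩ := chain_prefix M vs' us hM
    exact ⟨Sum.inr (us ++ vs') :: N, ⟨poel_concat_left hb, hN⟩, by simp [hlen]⟩

lemma chain_append : ∀ (L : List (TS F V)) (us : List (Trm F V)),
    DescChain (Poel prec ℓ) (Sum.inr us) L →
    ∀ (vs : List (Trm F V)) (M : List (TS F V)),
      DescChain (Poel prec ℓ) (Sum.inr vs) M →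
      ∃ N, DescChain (Poel prec ℓ) (Sum.inr (us ++ vs)) N ∧
        N.length = L.length + M.length
  | [], us, _, vs, M, hM => by
    obtain ⟨N, hN, hlen⟩ := chain_prefix M vs us hM
    exact ⟨N, hN, by simp [hlen]⟩
  | a :: L, us, ⟨ha, hL⟩, vs, M, hM => by
    obtain ⟨us', rfl⟩ := poel_inr_inv ha
    obtain ⟨N, hN, hlen⟩ := chain_append L us' hL vs M hM
    exact ⟨Sum.inr (us' ++ vs) :: N, ⟨poel_concat_right ha, hN⟩, by simp [hlen]; omega⟩

variable {Slow : TS F V → ℕ}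

lemma slow_lt (hSlow : IsMaxChainLen (Poel prec ℓ) Slow) {a b : TS F V}
    (h : Poel prec ℓ a b) : Slow b < Slow a := by
  obtain ⟨⟨L, hL, hlen⟩, _⟩ := hSlow b
  have h2 := (hSlow a).2 (b :: L) ⟨h, hL⟩
  simp only [List.length_cons, hlen] at h2
  omega

lemma sum_le_slow (hSlow : IsMaxChainLen (Poel prec ℓ) Slow) :
    ∀ ts : List (Trm F V),
      (ts.map (fun t => Slow (Sum.inl t))).sum ≤ Slow (Sum.inr ts) := by
  intro ts
  induction ts with
  | nil => simp
  | cons t ts ih =>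
    obtain ⟨⟨L, hL, hlen⟩, _⟩ := hSlow (Sum.inl t)
    obtain ⟨N1, hN1, hlen1⟩ := chain_toL L (Sum.inl t) hL
    obtain ⟨L2, hL2, hlen2⟩ := (hSlow (Sum.inr ts)).1
    obtain ⟨N, hN, hlenN⟩ := chain_append N1 [t] hN1 ts L2 hL2
    have h2 := (hSlow (Sum.inr ([t] ++ ts))).2 N hN
    simp only [List.singleton_append] at h2
    simp only [List.map_cons, List.sum_cons]
    omega

/-- Sum of `Slow ∘ inl` over the sequence represented by a `TS`. -/
def sumSlow (Slow : TS F V → ℕ) (b : TS F V) : ℕ :=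
  ((toL b).map (fun t => Slow (Sum.inl t))).sum

@[simp] lemma sumSlow_inl (t : Trm F V) : sumSlow Slow (Sum.inl t) = Slow (Sum.inl t) := by
  simp [sumSlow, toL]

lemma sumSlow_lt (hSlow : IsMaxChainLen (Poel prec ℓ) Slow) {t : Trm F V} {b : TS F V}
    (h : Poel prec ℓ (Sum.inl t) b) : sumSlow Slow b < Slow (Sum.inl t) := by
  have hb : sumSlow Slow b ≤ Slow b := by
    match b with
    | Sum.inl t' => simp
    | Sum.inr l => exact sum_le_slow hSlow l
  exact lt_of_le_of_lt hb (slow_lt hSlow h)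

lemma ge_sum (hSlow : IsMaxChainLen (Poel prec ℓ) Slow) :
    ∀ (as bs : List (TS F V)), PoelGE prec ℓ as bs →
      (∀ a ∈ as, ∃ t, a = Sum.inl t) →
      (bs.map (sumSlow Slow)).sum ≤ (as.map (sumSlow Slow)).sum := by
  intro as
  induction as with
  | nil => intro bs h _; cases h; simp
  | cons a as ih =>
    intro bs h hall
    cases h with
    | cons_eq h =>
      have := ih _ h (fun x hx => hall x (List.mem_cons_of_mem _ hx))
      simp only [List.map_cons, List.sum_cons]
      omega
    | cons_lt h h2 =>
      obtain ⟨t, rfl⟩ := hall a List.mem_cons_self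
      have h3 := sumSlow_lt hSlow h
      have := ih _ h2 (fun x hx => hall x (List.mem_cons_of_mem _ hx))
      simp only [List.map_cons, List.sum_cons, sumSlow_inl]
      omega

lemma prod_sum (hSlow : IsMaxChainLen (Poel prec ℓ) Slow) :
    ∀ (as bs : List (TS F V)), PoelProd prec ℓ as bs →
      (∀ a ∈ as, ∃ t, a = Sum.inl t) →
      (bs.map (sumSlow Slow)).sum < (as.map (sumSlow Slow)).sum := by
  intro as
  induction as with
  | nil => intro bs h _; cases h
  | cons a as ih =>
    intro bs h hall
    cases h with
    | strict h hge =>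
      obtain ⟨t, rfl⟩ := hall a List.mem_cons_self
      have h3 := sumSlow_lt hSlow h
      have h4 := ge_sum hSlow _ _ hge (fun x hx => hall x (List.mem_cons_of_mem _ hx))
      simp only [List.map_cons, List.sum_cons, sumSlow_inl]
      omega
    | cons_eq h =>
      have := ih _ h (fun x hx => hall x (List.mem_cons_of_mem _ hx))
      simp only [List.map_cons, List.sum_cons]
      omega
    | cons_lt h h2 =>
      obtain ⟨t, rfl⟩ := hall a List.mem_cons_self
      have h3 := sumSlow_lt hSlow h
      have h4 := ih _ h2 (fun x hx => hall x (List.mem_cons_of_mem _ hx))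
      have h5 : sumSlow Slow _ ≤ Slow (Sum.inl t) := le_of_lt h3
      simp only [List.map_cons, List.sum_cons, sumSlow_inl]
      omega

lemma sum_flatten_toL (Slow : TS F V → ℕ) : ∀ (bs : List (TS F V)),
    (((bs.map toL).flatten).map (fun t => Slow (Sum.inl t))).sum
      = (bs.map (sumSlow Slow)).sum
  | [] => rfl
  | b :: bs => by
    simp only [List.map_cons, List.flatten_cons, List.map_append, List.sum_append,
      sum_flatten_toL Slow bs]
    rfl

lemma slow_le_sum (hSlow : IsMaxChainLen (Poel prec ℓ) Slow) :
    ∀ (n : ℕ) (ts : List (Trm F V)), Slow (Sum.inr ts) ≤ n →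
      Slow (Sum.inr ts) ≤ (ts.map (fun t => Slow (Sum.inl t))).sum := by
  intro n
  induction n with
  | zero => intro ts h; omega
  | succ n ih =>
    intro ts hn
    obtain ⟨⟨L, hL, hlen⟩, _⟩ := hSlow (Sum.inr ts)
    match L, hL, hlen with
    | [], _, hlen => simp at hlen; omega
    | b :: L', ⟨hb, hL'⟩, hlen =>
      obtain ⟨us, rfl⟩ := poel_inr_inv hb
      have h1 : Slow (Sum.inr us) < Slow (Sum.inr ts) := slow_lt hSlow hb
      have h2 := (hSlow (Sum.inr us)).2 L' hL'
      have h3 := ih us (by omega)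
      cases hb with
      | ms bs e p =>
        have h4 := prod_sum hSlow _ _ p (by simp)
        have h5 : ((ts.map Sum.inl).map (sumSlow Slow)).sum
            = (ts.map (fun t => Slow (Sum.inl t))).sum := by
          simp [List.map_map, Function.comp_def]
        have h6 : (us.map (fun t => Slow (Sum.inl t))).sum
            = (bs.map (sumSlow Slow)).sum := by
          rw [e]; exact sum_flatten_toL Slow bs
        simp only [List.length_cons] at hlen
        omega

end Aux

/-- `Slow_ℓ` of a sequence is the sum of `Slow_ℓ` of its members:
`Slow_ℓ(list(t₁,…,t_k)) = Σᵢ Slow_ℓ(tᵢ)`. -/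
theorem slow_seq_eq_sum {F V : Type} [Finite F] (prec : F → F → Prop)
    (hirr : ∀ f, ¬ prec f f) (htrans : ∀ f g h, prec f g → prec g h → prec f h)
    (ℓ : ℕ) (hℓ : 1 ≤ ℓ)
    (Slow : TS F V → ℕ) (hSlow : IsMaxChainLen (Poel prec ℓ) Slow)
    (ts : List (Trm F V)) :
    Slow (Sum.inr ts) = (ts.map (fun t => Slow (Sum.inl t))).sum := by
  exact le_antisymm (slow_le_sum hSlow (Slow (Sum.inr ts)) ts le_rfl) (sum_le_slow hSlow ts)
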